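/- Let W be a nonnegative weight function on a domain Ω ⊂ ℝ², with finite moments of all orders and positive-definite moment functional (∫_Ω p² W > 0 for every nonzero polynomial p), which is centrally symmetric (W(−x,−y) = W(x,y) and (x,y) ∈ Ω ⟹ (−x,−y) ∈ Ω). Then every cubature rule of degree 2n−1 for ∫_Ω · W, i.e., points (x_k,y_k), 1 ≤ k ≤ N, and weights λ_k with ∫_Ω f W = Σ_{k=1}^N λ_k f(x_k,y_k) for all f ∈ Π²_{2n−1}, satisfies N ≥ dim Π²_{n−1} + ⌊n/2⌋ = n(n+1)/2 + ⌊n/2⌋. -/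

import Mathlib

open MeasureTheory

section MoellerHelpers

open MvPolynomial Finset

/-- exponent of a bivariate monomial -/
noncomputable def mexp (m : ℕ × ℕ) : Fin 2 →₀ ℕ := Finsupp.single 0 m.1 + Finsupp.single 1 m.2

lemma mexp_inj : Function.Injective mexp := by
  intro a b h
  have h0 := DFunLike.congr_fun h (0 : Fin 2)
  have h1 := DFunLike.congr_fun h (1 : Fin 2)
  simp [mexp, Finsupp.single_apply] at h0 h1
  exact Prod.ext h0 h1

noncomputable def mpoly (m : ℕ × ℕ) : MvPolynomial (Fin 2) ℝ := monomial (mexp m) 1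

lemma mpoly_eq (m : ℕ × ℕ) : mpoly m = X 0 ^ m.1 * X 1 ^ m.2 := by
  simp [mpoly, mexp, X_pow_eq_monomial, monomial_mul]

lemma mpoly_eval (m : ℕ × ℕ) (x y : ℝ) : eval ![x, y] (mpoly m) = x ^ m.1 * y ^ m.2 := by
  simp [mpoly_eq]

lemma mpoly_coeff (m m' : ℕ × ℕ) :
    coeff (mexp m') (mpoly m) = if m = m' then 1 else 0 := by
  rw [mpoly, coeff_monomial]
  by_cases h : m = m'
  · simp [h]
  · rw [if_neg (fun hc => h (mexp_inj hc)), if_neg h]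

lemma mpoly_totalDegree (m : ℕ × ℕ) : (mpoly m).totalDegree ≤ m.1 + m.2 := by
  rw [mpoly_eq]
  calc (X 0 ^ m.1 * X 1 ^ m.2 : MvPolynomial (Fin 2) ℝ).totalDegree
      ≤ _ + _ := totalDegree_mul _ _
    _ ≤ m.1 + m.2 := by rw [totalDegree_X_pow, totalDegree_X_pow]

/-- index set of monomials `x^i y^j` with `i+j ≤ n-1` and `i+j ≡ n-1 [MOD 2]` -/
def bset (n : ℕ) : Finset (ℕ × ℕ) :=
  (range n ×ˢ range n).filter (fun p => p.1 + p.2 + 1 ≤ n ∧ (p.1 + p.2) % 2 = (n + 1) % 2)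

lemma mem_bset {n : ℕ} {p : ℕ × ℕ} :
    p ∈ bset n ↔ p.1 + p.2 + 1 ≤ n ∧ (p.1 + p.2) % 2 = (n + 1) % 2 := by
  simp only [bset, mem_filter, mem_product, mem_range]
  constructor
  · tauto
  · intro h; refine ⟨⟨?_, ?_⟩, h⟩ <;> omega

def dset (n : ℕ) : Finset (ℕ × ℕ) :=
  (range (n + 2) ×ˢ range (n + 2)).filter (fun p => p.1 + p.2 = n + 1)

lemma dset_card (n : ℕ) : (dset n).card = n + 2 := by
  have : dset n = (range (n + 2)).image (fun i => (i, n + 1 - i)) := by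
    ext ⟨i, j⟩
    simp only [dset, mem_filter, mem_product, mem_range, mem_image, Prod.mk.injEq]
    constructor
    · rintro ⟨⟨h1, h2⟩, h3⟩; exact ⟨i, by omega, rfl, by omega⟩
    · rintro ⟨a, ha, rfl, rfl⟩; omega
  rw [this, card_image_of_injective _ (fun a b h => (Prod.mk.injEq _ _ _ _).mp h |>.1),
    card_range]

lemma bset_step (n : ℕ) : bset (n + 2) = bset n ∪ dset n := by
  ext ⟨i, j⟩
  simp only [mem_bset, mem_union, dset, mem_filter, mem_product, mem_range]
  omega

lemma bset_card (n : ℕ) : 2 * (bset n).card = n * (n + 1) / 2 + n / 2 + n % 2 := by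
  induction n using Nat.strong_induction_on with
  | _ n ih =>
    match n with
    | 0 => decide
    | 1 => decide
    | (m + 2) =>
      have h1 := ih m (by omega)
      have hdisj : Disjoint (bset m) (dset m) := by
        rw [disjoint_left]
        rintro ⟨i, j⟩ hb hd
        rw [mem_bset] at hb
        simp only [dset, mem_filter] at hd
        omega
      have hc : (bset (m + 2)).card = (bset m).card + (m + 2) := by
        rw [bset_step, card_union_of_disjoint hdisj, dset_card]
      rw [hc]
      have h2 : (m + 2) * (m + 2 + 1) = m * (m + 1) + (4 * m + 6) := by ring
      have h3 : m * (m + 1) % 2 = 0 := Nat.even_iff.mp (Nat.even_mul_succ_self m)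
      omega

lemma neg_one_pow_mod (a : ℕ) : (-1 : ℝ) ^ a = (-1) ^ (a % 2) := by
  conv_lhs => rw [← Nat.div_add_mod a 2, pow_add, pow_mul]
  simp

/-- the linear map sending coefficient vectors to polynomials -/
noncomputable def Pmap (n : ℕ) : ((↥(bset n)) → ℝ) →ₗ[ℝ] MvPolynomial (Fin 2) ℝ where
  toFun c := ∑ m : ↥(bset n), c m • mpoly m.1
  map_add' a b := by simp [add_smul, Finset.sum_add_distrib]
  map_smul' r a := by simp [smul_smul, Finset.smul_sum]

lemma Pmap_totalDegree {n : ℕ} (c : (↥(bset n)) → ℝ) : (Pmap n c).totalDegree ≤ n - 1 := by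
  refine le_trans (totalDegree_finset_sum _ _) ?_
  refine Finset.sup_le fun m _ => ?_
  refine le_trans (totalDegree_smul_le _ _) (le_trans (mpoly_totalDegree _) ?_)
  have := (mem_bset.mp m.2).1
  omega

lemma Pmap_inj {n : ℕ} (c : (↥(bset n)) → ℝ) (h : Pmap n c = 0) : c = 0 := by
  funext m
  have := congrArg (coeff (mexp m.1)) h
  rw [show Pmap n c = ∑ m : ↥(bset n), c m • mpoly m.1 from rfl] at this
  rw [coeff_sum] at this
  simp only [coeff_smul, mpoly_coeff, coeff_zero, smul_eq_mul] at this
  rw [Finset.sum_eq_single m] at this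
  · simpa using this
  · intro b _ hb
    rw [if_neg (fun hc => hb (Subtype.ext hc)), mul_zero]
  · intro hm; exact absurd (Finset.mem_univ m) hm

lemma Pmap_parity {n : ℕ} (c : (↥(bset n)) → ℝ) (x y : ℝ) :
    eval ![-x, -y] (Pmap n c) = (-1 : ℝ) ^ (n + 1) * eval ![x, y] (Pmap n c) := by
  rw [show Pmap n c = ∑ m : ↥(bset n), c m • mpoly m.1 from rfl]
  rw [map_sum, map_sum, Finset.mul_sum]
  refine Finset.sum_congr rfl fun m _ => ?_
  have hsm : ∀ (v : Fin 2 → ℝ) (r : ℝ) (f : MvPolynomial (Fin 2) ℝ),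
      eval v (r • f) = r * eval v f := by
    intro v r f; rw [smul_eq_C_mul]; simp
  rw [hsm, hsm, mpoly_eval, mpoly_eval]
  have hpar := (mem_bset.mp m.2).2
  rw [neg_pow x, neg_pow y]
  have h1 : (-1 : ℝ) ^ m.1.1 * x ^ m.1.1 * ((-1) ^ m.1.2 * y ^ m.1.2)
      = (-1 : ℝ) ^ (m.1.1 + m.1.2) * (x ^ m.1.1 * y ^ m.1.2) := by
    rw [pow_add]; ring
  rw [h1]
  have h2 : (-1 : ℝ) ^ (m.1.1 + m.1.2) = (-1) ^ (n + 1) := by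
    rw [neg_one_pow_mod, neg_one_pow_mod (n + 1), hpar]
  rw [h2]; ring

lemma Pmap_eval_zero {n : ℕ} (hodd : (n + 1) % 2 = 1) (c : (↥(bset n)) → ℝ) :
    eval ![(0 : ℝ), 0] (Pmap n c) = 0 := by
  rw [show Pmap n c = ∑ m : ↥(bset n), c m • mpoly m.1 from rfl]
  rw [map_sum]
  refine Finset.sum_eq_zero fun m _ => ?_
  have hsm : ∀ (v : Fin 2 → ℝ) (r : ℝ) (f : MvPolynomial (Fin 2) ℝ),
      eval v (r • f) = r * eval v f := by
    intro v r f; rw [smul_eq_C_mul]; simp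
  rw [hsm, mpoly_eval]
  have hpar := (mem_bset.mp m.2).2
  rcases Nat.eq_zero_or_pos m.1.1 with h1 | h1
  · rw [zero_pow (show m.1.2 ≠ 0 by omega)]; ring
  · rw [zero_pow (show m.1.1 ≠ 0 by omega)]; ring

noncomputable def evalAt (v : Fin 2 → ℝ) : MvPolynomial (Fin 2) ℝ →ₗ[ℝ] ℝ where
  toFun f := eval v f
  map_add' a b := by simp
  map_smul' r a := by simp [smul_eq_C_mul, smul_eq_mul]

noncomputable def sigmaP (t : ℝ) : MvPolynomial (Fin 2) ℝ := X 0 + C t * X 1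

lemma sigmaP_totalDegree (t : ℝ) : (sigmaP t).totalDegree ≤ 1 := by
  refine le_trans (totalDegree_add _ _) (max_le ?_ ?_)
  · exact le_of_eq (totalDegree_X 0)
  · refine le_trans (totalDegree_mul _ _) ?_
    rw [totalDegree_C, totalDegree_X]

lemma sigmaP_eval (t x y : ℝ) : eval ![x, y] (sigmaP t) = x + t * y := by
  simp [sigmaP]

/-- the main linear map -/
noncomputable def Phi (n N : ℕ) (pt : Fin N → ℝ × ℝ) (t : ℝ) :
    (((↥(bset n)) → ℝ) × ((↥(bset n)) → ℝ)) →ₗ[ℝ] (Fin N → ℝ) :=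
  (LinearMap.pi fun k => evalAt ![(pt k).1, (pt k).2]) ∘ₗ
    ((Pmap n) ∘ₗ (LinearMap.fst ℝ _ _) +
      (LinearMap.mulLeft ℝ (sigmaP t)) ∘ₗ (Pmap n) ∘ₗ (LinearMap.snd ℝ _ _))

lemma Phi_apply (n N : ℕ) (pt : Fin N → ℝ × ℝ) (t : ℝ) (cd) (k : Fin N) :
    Phi n N pt t cd k
      = eval ![(pt k).1, (pt k).2] (Pmap n cd.1 + sigmaP t * Pmap n cd.2) := by
  simp [Phi, evalAt, LinearMap.mulLeft_apply]

noncomputable def eneg : (ℝ × ℝ) ≃ᵐ (ℝ × ℝ) := (Homeomorph.neg (ℝ × ℝ)).toMeasurableEquiv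

lemma integral_odd_zero (Ω : Set (ℝ × ℝ)) (W : ℝ × ℝ → ℝ)
    (hW_sym : ∀ z : ℝ × ℝ, z ∈ Ω → -z ∈ Ω ∧ W (-z) = W z)
    (g : ℝ × ℝ → ℝ)
    (hint : IntegrableOn g Ω)
    (hodd : ∀ z ∈ Ω, g (-z) = - g z) :
    ∫ z in Ω, g z = 0 := by
  set μ := volume.restrict Ω with hμ
  have hΩ : Neg.neg ⁻¹' Ω = Ω := by
    ext z
    constructor
    · intro hz
      have h2 := (hW_sym (-z) hz).1
      simpa using h2
    · intro hz; exact (hW_sym z hz).1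
  have hvol : ∀ S : Set (ℝ × ℝ), volume (Neg.neg ⁻¹' S) = volume S := fun S =>
    Measure.measure_preimage_neg volume S
  have hmap : μ.map eneg = μ := by
    refine Measure.ext fun A hA => ?_
    rw [MeasurableEquiv.map_apply]
    have hA' : MeasurableSet (eneg ⁻¹' A) := eneg.measurable hA
    rw [hμ, Measure.restrict_apply hA', Measure.restrict_apply hA]
    have : eneg ⁻¹' A ∩ Ω = Neg.neg ⁻¹' (A ∩ Ω) := by
      rw [Set.preimage_inter, hΩ]; rfl
    rw [this, hvol]
  obtain ⟨g', hg'sm, hg'ae⟩ :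
      ∃ g' : ℝ × ℝ → ℝ, StronglyMeasurable g' ∧ g =ᵐ[μ] g' :=
    ⟨hint.aestronglyMeasurable.mk g, hint.aestronglyMeasurable.stronglyMeasurable_mk,
      hint.aestronglyMeasurable.ae_eq_mk⟩
  have hg'm : Measurable g' := hg'sm.measurable
  have haeodd : (fun z => g' (-z)) =ᵐ[μ] (fun z => - g' z) := by
    rw [Filter.eventuallyEq_iff_exists_mem]
    refine ⟨{z | g' (-z) = - g' z}, ?_, fun z hz => hz⟩
    rw [mem_ae_iff]
    set T := {z : ℝ × ℝ | g' (-z) = - g' z}ᶜ with hT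
    have hTmeas : MeasurableSet T := by
      apply MeasurableSet.compl
      exact measurableSet_eq_fun (hg'm.comp measurable_neg) hg'm.neg
    set E := {z : ℝ × ℝ | g z ≠ g' z} with hE
    have hEnull : μ E = 0 := hg'ae
    have hsub : T ∩ Ω ⊆ (E ∩ Ω) ∪ Neg.neg ⁻¹' (E ∩ Ω) := by
      rintro z ⟨hzT, hzΩ⟩
      by_contra hcon
      rw [Set.mem_union] at hcon
      push_neg at hcon
      obtain ⟨h1, h2⟩ := hcon
      have hz1 : g z = g' z := by
        by_contra hne; exact h1 ⟨hne, hzΩ⟩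
      have hz2 : g (-z) = g' (-z) := by
        by_contra hne
        exact h2 ⟨hne, (hW_sym z hzΩ).1⟩
      have : g' (-z) = - g' z := by
        rw [← hz2, ← hz1, hodd z hzΩ]
      exact hzT this
    have h1 : μ T = volume (T ∩ Ω) := Measure.restrict_apply hTmeas
    have h2 : volume (T ∩ Ω) ≤ volume (E ∩ Ω) + volume (Neg.neg ⁻¹' (E ∩ Ω)) :=
      le_trans (measure_mono hsub) (measure_union_le _ _)
    have h3 : volume (Neg.neg ⁻¹' (E ∩ Ω)) = volume (E ∩ Ω) := hvol _
    have h4 : volume (E ∩ Ω) ≤ μ E := Measure.le_restrict_apply _ _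
    rw [hEnull] at h4
    simp only [nonpos_iff_eq_zero] at h4
    rw [h1]
    have h5 : volume (E ∩ Ω) + volume (Neg.neg ⁻¹' (E ∩ Ω)) = 0 := by
      rw [h3, h4, add_zero]
    rw [h5] at h2
    exact le_antisymm h2 zero_le
  have key : ∫ z, g' z ∂μ = - ∫ z, g' z ∂μ := by
    conv_lhs => rw [← hmap]
    rw [integral_map_equiv]
    have heq : ∫ z, g' (eneg z) ∂μ = ∫ z, g' (-z) ∂μ := by congr
    rw [heq, integral_congr_ae haeodd, integral_neg]
  have hg'int : ∫ z, g' z ∂μ = 0 := by linarith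
  calc ∫ z in Ω, g z = ∫ z, g' z ∂μ := integral_congr_ae hg'ae
    _ = 0 := hg'int

end MoellerHelpers

/-- Möller's lower bound: for a centrally symmetric weight `W`, every cubature rule of
degree `2n-1` has at least `dim Π²_{n-1} + ⌊n/2⌋ = n(n+1)/2 + ⌊n/2⌋` nodes. -/
theorem stmt18 (Ω : Set (ℝ × ℝ)) (W : ℝ × ℝ → ℝ)
    (hW_nn : ∀ z ∈ Ω, 0 ≤ W z)
    (hW_mom : ∀ f : MvPolynomial (Fin 2) ℝ,
      IntegrableOn (fun z => MvPolynomial.eval ![z.1, z.2] f * W z) Ω)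
    (hW_pd : ∀ f : MvPolynomial (Fin 2) ℝ, f ≠ 0 →
      0 < ∫ z in Ω, (MvPolynomial.eval ![z.1, z.2] f) ^ 2 * W z)
    (hW_sym : ∀ z : ℝ × ℝ, z ∈ Ω → -z ∈ Ω ∧ W (-z) = W z)
    (n : ℕ) (hn : 1 ≤ n)
    (N : ℕ) (pt : Fin N → ℝ × ℝ) (lam : Fin N → ℝ)
    (hpt : Function.Injective pt)
    (hcub : ∀ f : MvPolynomial (Fin 2) ℝ, f.totalDegree ≤ 2 * n - 1 →
      ∫ z in Ω, MvPolynomial.eval ![z.1, z.2] f * W z =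
        ∑ k, lam k * MvPolynomial.eval ![(pt k).1, (pt k).2] f) :
    n * (n + 1) / 2 + n / 2 ≤ N := by
  classical
  open MvPolynomial in
  -- `I f = 0` for odd polynomials
  have Iodd : ∀ f : MvPolynomial (Fin 2) ℝ,
      (∀ x y : ℝ, eval ![-x, -y] f = - eval ![x, y] f) →
      ∫ z in Ω, eval ![z.1, z.2] f * W z = 0 := by
    intro f hf
    refine integral_odd_zero Ω W hW_sym _ (hW_mom f) ?_
    intro z hz
    have h1 : eval ![(-z).1, (-z).2] f = - eval ![z.1, z.2] f := by
      rw [show ((-z : ℝ × ℝ)).1 = -z.1 from rfl, show ((-z : ℝ × ℝ)).2 = -z.2 from rfl, hf]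
    rw [h1, (hW_sym z hz).2]; ring
  -- additivity of the moment functional
  have Iadd : ∀ f g : MvPolynomial (Fin 2) ℝ,
      ∫ z in Ω, eval ![z.1, z.2] (f + g) * W z =
        (∫ z in Ω, eval ![z.1, z.2] f * W z) + ∫ z in Ω, eval ![z.1, z.2] g * W z := by
    intro f g
    have heq : (fun z : ℝ × ℝ => eval ![z.1, z.2] (f + g) * W z)
        = fun z => eval ![z.1, z.2] f * W z + eval ![z.1, z.2] g * W z := by
      funext z; rw [map_add]; ring
    rw [heq]
    exact integral_add (hW_mom f) (hW_mom g)
  -- a polynomial of degree ≤ n-1 vanishing at all nodes is zero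
  have L1 : ∀ f : MvPolynomial (Fin 2) ℝ, f.totalDegree ≤ n - 1 →
      (∀ k, eval ![(pt k).1, (pt k).2] f = 0) → f = 0 := by
    intro f hdeg hvan
    by_contra hf0
    have hpd := hW_pd f hf0
    have hdeg2 : (f * f).totalDegree ≤ 2 * n - 1 :=
      le_trans (totalDegree_mul f f) (by omega)
    have hc := hcub (f * f) hdeg2
    have hz : ∑ k, lam k * eval ![(pt k).1, (pt k).2] (f * f) = 0 := by
      refine Finset.sum_eq_zero fun k _ => ?_
      rw [map_mul, hvan k]; ring
    have heq : (fun z : ℝ × ℝ => eval ![z.1, z.2] f ^ 2 * W z)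
        = fun z => eval ![z.1, z.2] (f * f) * W z := by
      funext z; rw [map_mul]; ring
    rw [heq, hc, hz] at hpd
    exact lt_irrefl 0 hpd
  -- the key orthogonality/parity step
  have L3 : ∀ u w : MvPolynomial (Fin 2) ℝ, u.totalDegree ≤ n - 1 → w.totalDegree ≤ n →
      (∀ x y : ℝ, eval ![-x, -y] (w * u) = - eval ![x, y] (w * u)) →
      (∀ k, eval ![(pt k).1, (pt k).2] (u + w) = 0) → u = 0 := by
    intro u w hdu hdw hodd hvan
    by_contra hu0
    have hpd := hW_pd u hu0
    have hdusum : (u + w).totalDegree ≤ n := le_trans (totalDegree_add u w) (by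
      refine max_le (le_trans hdu ?_) hdw
      omega)
    have hdeg : ((u + w) * u).totalDegree ≤ 2 * n - 1 :=
      le_trans (totalDegree_mul _ _) (by omega)
    have hc := hcub ((u + w) * u) hdeg
    have hz : ∑ k, lam k * eval ![(pt k).1, (pt k).2] ((u + w) * u) = 0 := by
      refine Finset.sum_eq_zero fun k _ => ?_
      rw [map_mul, hvan k]; ring
    have hsplit : (u + w) * u = u * u + w * u := by ring
    rw [hsplit] at hc hz
    rw [Iadd (u * u) (w * u), Iodd (w * u) hodd, add_zero] at hc
    rw [hz] at hc
    have heq : (fun z : ℝ × ℝ => eval ![z.1, z.2] u ^ 2 * W z)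
        = fun z => eval ![z.1, z.2] (u * u) * W z := by
      funext z; rw [map_mul]; ring
    rw [heq, hc] at hpd
    exact lt_irrefl 0 hpd
  -- choose a linear form not vanishing at any nonzero node
  obtain ⟨t, htm⟩ := Infinite.exists_notMem_finset
    (Finset.univ.image fun k : Fin N => -(pt k).1 / (pt k).2)
  have ht : ∀ k : Fin N, pt k ≠ 0 → (pt k).1 + t * (pt k).2 ≠ 0 := by
    intro k hk h0
    by_cases hy : (pt k).2 = 0
    · have hx : (pt k).1 = 0 := by rw [hy] at h0; linarith
      exact hk (Prod.ext hx hy)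
    · have : t = -(pt k).1 / (pt k).2 := by
        field_simp
        linarith
      exact htm (Finset.mem_image.mpr ⟨k, Finset.mem_univ k, this.symm⟩)
  -- the kernel of Phi
  have hker : ∀ cd : ((↥(bset n)) → ℝ) × ((↥(bset n)) → ℝ), Phi n N pt t cd = 0 →
      cd.1 = 0 ∧ ∀ k : Fin N, pt k = 0 ∨ eval ![(pt k).1, (pt k).2] (Pmap n cd.2) = 0 := by
    rintro ⟨c, d⟩ h
    have hvan : ∀ k, eval ![(pt k).1, (pt k).2] (Pmap n c + sigmaP t * Pmap n d) = 0 := by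
      intro k
      rw [← Phi_apply n N pt t (c, d) k]
      exact congrFun h k
    have hodd : ∀ x y : ℝ,
        eval ![-x, -y] (sigmaP t * Pmap n d * Pmap n c)
          = - eval ![x, y] (sigmaP t * Pmap n d * Pmap n c) := by
      intro x y
      have hs : eval ![-x, -y] (sigmaP t) = - eval ![x, y] (sigmaP t) := by
        simp only [sigmaP, map_add, map_mul, eval_X, eval_C, Matrix.cons_val_zero,
          Matrix.cons_val_one, Matrix.head_cons]
        ring
      rw [map_mul, map_mul, map_mul, map_mul, Pmap_parity, Pmap_parity, hs]
      have he : (-1 : ℝ) ^ (n + 1) * ((-1 : ℝ) ^ (n + 1)) = 1 := by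
        rw [← pow_add]
        exact Even.neg_one_pow ⟨n + 1, by ring⟩
      have key : ∀ A B C e : ℝ, e * e = 1 → (-A * (e * B)) * (e * C) = -((A * B) * C) := by
        intro A B C e he2
        rw [show (-A * (e * B)) * (e * C) = -((A * B) * C) * (e * e) by ring, he2, mul_one]
      exact key _ _ _ _ he
    have hdw : (sigmaP t * Pmap n d).totalDegree ≤ n := by
      refine le_trans (totalDegree_mul _ _) ?_
      have h1 := sigmaP_totalDegree t
      have h2 := Pmap_totalDegree d
      omega
    have hc0 : Pmap n c = 0 := L3 (Pmap n c) (sigmaP t * Pmap n d)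
      (Pmap_totalDegree c) hdw hodd hvan
    refine ⟨Pmap_inj c hc0, fun k => ?_⟩
    by_cases hk : pt k = 0
    · exact Or.inl hk
    · right
      have := hvan k
      rw [hc0, zero_add, map_mul] at this
      have hs := ht k hk
      rw [sigmaP_eval] at this
      rcases mul_eq_zero.mp this with h | h
      · exact absurd h hs
      · exact h
  -- rank-nullity
  have hrn := LinearMap.finrank_range_add_finrank_ker (Phi n N pt t)
  have hdom : Module.finrank ℝ (((↥(bset n)) → ℝ) × ((↥(bset n)) → ℝ))
      = (bset n).card + (bset n).card := by
    rw [Module.finrank_prod]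
    simp [Module.finrank_fintype_fun_eq_card]
  have hrange : Module.finrank ℝ (LinearMap.range (Phi n N pt t)) ≤ N := by
    refine le_trans (Submodule.finrank_le _) ?_
    simp [Module.finrank_fintype_fun_eq_card]
  -- kernel dimension bound
  have hkerdim : Module.finrank ℝ (LinearMap.ker (Phi n N pt t)) ≤ n % 2 := by
    rcases Nat.even_or_odd n with hev | hodd
    · -- n even : kernel is trivial
      have hn1 : (n + 1) % 2 = 1 := by
        rcases hev with ⟨m, hm⟩; omega
      have hbot : LinearMap.ker (Phi n N pt t) = ⊥ := by
        rw [LinearMap.ker_eq_bot']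
        rintro ⟨c, d⟩ h
        obtain ⟨hc0, hd⟩ := hker (c, d) h
        have hdvan : ∀ k, eval ![(pt k).1, (pt k).2] (Pmap n d) = 0 := by
          intro k
          rcases hd k with hk | hk
          · rw [show (pt k).1 = 0 by simp [hk], show (pt k).2 = 0 by simp [hk]]
            exact Pmap_eval_zero hn1 d
          · exact hk
        have hd0 : Pmap n d = 0 := L1 (Pmap n d) (Pmap_totalDegree d) hdvan
        have hdz := Pmap_inj d hd0
        exact Prod.ext hc0 hdz
      rw [hbot]
      simp
    · -- n odd : kernel has dimension at most 1
      have hn2 : n % 2 = 1 := Nat.odd_iff.mp hodd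
      rw [hn2]
      set K := LinearMap.ker (Phi n N pt t) with hK
      let ψ : ↥K →ₗ[ℝ] ℝ :=
        (evalAt ![0, 0]) ∘ₗ (Pmap n) ∘ₗ (LinearMap.snd ℝ _ _) ∘ₗ K.subtype
      have hψinj : Function.Injective ψ := by
        rw [← LinearMap.ker_eq_bot]
        rw [Submodule.eq_bot_iff]
        rintro ⟨⟨c, d⟩, hcd⟩ hx
        have hcd' : Phi n N pt t (c, d) = 0 := hcd
        obtain ⟨hc0, hd⟩ := hker (c, d) hcd'
        have hx0 : eval ![(0 : ℝ), 0] (Pmap n d) = 0 := hx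
        have hdvan : ∀ k, eval ![(pt k).1, (pt k).2] (Pmap n d) = 0 := by
          intro k
          rcases hd k with hk | hk
          · rw [show (pt k).1 = 0 by simp [hk], show (pt k).2 = 0 by simp [hk]]
            exact hx0
          · exact hk
        have hd0 : Pmap n d = 0 := L1 (Pmap n d) (Pmap_totalDegree d) hdvan
        have hdz := Pmap_inj d hd0
        exact Subtype.ext (Prod.ext hc0 hdz)
      have := LinearMap.finrank_le_finrank_of_injective hψinj
      simpa using this
  rw [hdom] at hrn
  have hfinal : (bset n).card + (bset n).card ≤ N + n % 2 := by omega
  have hb := bset_card n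
  omega
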